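/- arXiv:2505.00645 — 2 statements merged into one kernel-verified Lean document; each statement's English description precedes it below -/
import Mathlib

section
/- The twist J = Σ_{k=0}^{n-1} e_k ⊗ x^k for B = K[Z_n] satisfies (S ⊗ S)(J) = J, where S is the antipode of B. -/
set_option linter.unusedSectionVars false

open MonoidAlgebra Finset
open scoped TensorProduct

noncomputable section

variable (K : Type*) [CommRing K] (G : Type*) [CommGroup G]

namespace GroupBialgebra

instance instCoalgebra : Coalgebra K (MonoidAlgebra K G) :=
  MonoidAlgebra.instCoalgebra K K G

variable {K G}

lemma comul_single (g : G) (c : K) :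
    Coalgebra.comul (R := K) (MonoidAlgebra.single g c) =
      MonoidAlgebra.single g (1 : K) ⊗ₜ[K] MonoidAlgebra.single g c := by
  have h := MonoidAlgebra.comul_single (R := K) g c
  simp only [CommSemiring.comul_apply, TensorProduct.map_tmul, MonoidAlgebra.lsingle_apply] at h
  exact h

lemma counit_single (g : G) (c : K) :
    Coalgebra.counit (R := K) (MonoidAlgebra.single g c) = c := by
  have h := MonoidAlgebra.counit_single (R := K) g c
  simp only [CommSemiring.counit_apply] at h
  exact h

variable (K G)

instance instBialgebra : Bialgebra K (MonoidAlgebra K G) :=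
  Bialgebra.mk' K (MonoidAlgebra K G)
    (by simpa [MonoidAlgebra.one_def] using counit_single (1 : G) (1 : K))
    (fun {a b} => by
      induction a using MonoidAlgebra.induction_linear with
      | zero => simp
      | add f h hf hh => simp [add_mul, hf, hh]
      | single g c =>
        induction b using MonoidAlgebra.induction_linear with
        | zero => simp
        | add f h hf hh => simp [mul_add, hf, hh]
        | single h d =>
          simp only [MonoidAlgebra.single_mul_single, counit_single])
    (by rw [MonoidAlgebra.one_def, comul_single, Algebra.TensorProduct.one_def, MonoidAlgebra.one_def])
    (fun {a b} => by
      induction a using MonoidAlgebra.induction_linear with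
      | zero => simp
      | add f h hf hh => simp [add_mul, hf, hh]
      | single g c =>
        induction b using MonoidAlgebra.induction_linear with
        | zero => simp
        | add f h hf hh => simp [mul_add, hf, hh]
        | single h d =>
          simp only [MonoidAlgebra.single_mul_single, comul_single,
            Algebra.TensorProduct.tmul_mul_tmul, one_mul])

end GroupBialgebra

end

noncomputable section

/-- The group algebra `K[Z_n]` of the cyclic group of order `n`. -/
abbrev GroupAlgZn (K : Type*) [CommRing K] (n : ℕ) : Type _ :=
  MonoidAlgebra K (Multiplicative (ZMod n))

/-- The canonical generator `x` of the group algebra `K[Z_n]`. -/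
def xgen (K : Type*) [CommRing K] (n : ℕ) : GroupAlgZn K n :=
  MonoidAlgebra.of K (Multiplicative (ZMod n)) (Multiplicative.ofAdd (1 : ZMod n))

/-- The idempotent `e_k = (1/n) ∑_{i=0}^{n-1} q^{-ik} x^i` in `K[Z_n]`. -/
def eIdem (K : Type*) [Field K] (n : ℕ) (q : K) (k : ZMod n) : GroupAlgZn K n :=
  (n : K)⁻¹ • ∑ i ∈ Finset.range n, (q ^ (i * k.val))⁻¹ • (xgen K n) ^ i

/-- The antipode of the group Hopf algebra `K[Z_n]`, the algebra map induced by `g ↦ g⁻¹`. -/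
def antipodeGA (K : Type*) [CommRing K] (n : ℕ) : GroupAlgZn K n →ₐ[K] GroupAlgZn K n :=
  MonoidAlgebra.lift K (GroupAlgZn K n) (Multiplicative (ZMod n))
    ((MonoidAlgebra.of K (Multiplicative (ZMod n))).comp invMonoidHom)


section Helpers

variable {K : Type*} [Field K] {n : ℕ}

lemma xgen_pow_eq (K : Type*) [CommRing K] (n : ℕ) (i : ℕ) :
    (xgen K n) ^ i =
      MonoidAlgebra.single (Multiplicative.ofAdd ((i : ZMod n))) (1 : K) := by
  rw [xgen, ← map_pow]
  rw [MonoidAlgebra.of_apply]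
  congr 1
  rw [← ofAdd_nsmul]
  simp

lemma antipode_X (K : Type*) [CommRing K] (n : ℕ) (a : ZMod n) :
    antipodeGA K n (MonoidAlgebra.single (Multiplicative.ofAdd a) (1 : K)) =
      MonoidAlgebra.single (Multiplicative.ofAdd (-a)) (1 : K) := by
  rw [antipodeGA, MonoidAlgebra.lift_single]
  simp [invMonoidHom]

lemma qpow_congr (q : K) (hq : IsPrimitiveRoot q n) (hn : 0 < n) {a b : ℕ}
    (h : ((a : ZMod n) : ZMod n) = (b : ZMod n)) : q ^ a = q ^ b := by
  have hmod : a % n = b % n := by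
    rwa [ZMod.natCast_eq_natCast_iff] at h
  have key : ∀ m : ℕ, q ^ m = q ^ (m % n) := by
    intro m
    conv_lhs => rw [← Nat.div_add_mod m n]
    rw [pow_add, pow_mul, hq.pow_eq_one, one_pow, one_mul]
  rw [key a, key b, hmod]

lemma sigma_mem {k : ℕ} (hk : k ∈ Finset.range n) : (n - k) % n ∈ Finset.range n := by
  rcases Nat.eq_zero_or_pos n with h | h
  · simp at hk; omega
  · exact Finset.mem_range.2 (Nat.mod_lt _ h)

lemma sigma_sigma {k : ℕ} (hk : k ∈ Finset.range n) : (n - (n - k) % n) % n = k := by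
  rw [Finset.mem_range] at hk
  rcases Nat.eq_zero_or_pos k with rfl | hpos
  · simp
  · have h1 : (n - k) % n = n - k := Nat.mod_eq_of_lt (by omega)
    rw [h1]
    have : n - (n - k) = k := by omega
    rw [this, Nat.mod_eq_of_lt (by omega)]

lemma sigma_cast (hn : 0 < n) {k : ℕ} (hk : k < n) :
    (((n - k) % n : ℕ) : ZMod n) = -(k : ZMod n) := by
  rw [ZMod.natCast_mod]
  push_cast [Nat.cast_sub hk.le]
  simp

lemma antipode_eIdem (hn : 2 ≤ n) (q : K) (hq : IsPrimitiveRoot q n) (a : ZMod n) :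
    antipodeGA K n (eIdem K n q a) = eIdem K n q (-a) := by
  haveI : NeZero n := ⟨by omega⟩
  have hn0 : 0 < n := by omega
  rw [eIdem, eIdem, map_smul, map_sum]
  congr 1
  rw [Finset.sum_nbij' (i := fun k => (n - k) % n) (j := fun k => (n - k) % n)
    (hi := fun k hk => sigma_mem hk) (hj := fun k hk => sigma_mem hk)
    (left_neg := fun k hk => sigma_sigma hk) (right_neg := fun k hk => sigma_sigma hk)]
  intro i hi
  rw [Finset.mem_range] at hi
  rw [map_smul, xgen_pow_eq, antipode_X, xgen_pow_eq]
  rw [sigma_cast hn0 hi]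
  have hexp : q ^ (i * a.val) = q ^ ((n - i) % n * (-a).val) := by
    refine qpow_congr q hq hn0 ?_
    push_cast
    rw [sigma_cast hn0 hi, ZMod.natCast_val, ZMod.natCast_val]
    simp only [ZMod.cast_id]
    ring
  rw [hexp]

end Helpers

/-- the twist `J = ∑_k e_k ⊗ x^k` satisfies `(S ⊗ S)(J) = J`. -/
theorem SS_J_eq_J (K : Type*) [Field K] [CharZero K] (n : ℕ) (hn : 2 ≤ n)
    (q : K) (hq : IsPrimitiveRoot q n) :
    let J : GroupAlgZn K n ⊗[K] GroupAlgZn K n :=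
      ∑ k ∈ Finset.range n, eIdem K n q ((k : ℕ) : ZMod n) ⊗ₜ[K] ((xgen K n) ^ k)
    TensorProduct.map (antipodeGA K n).toLinearMap (antipodeGA K n).toLinearMap J = J := by
  haveI : NeZero n := ⟨by omega⟩
  have hn0 : 0 < n := by omega
  intro J
  show TensorProduct.map _ _ J = J
  rw [map_sum]
  rw [Finset.sum_nbij' (i := fun k => (n - k) % n) (j := fun k => (n - k) % n)
    (hi := fun k hk => sigma_mem hk) (hj := fun k hk => sigma_mem hk)
    (left_neg := fun k hk => sigma_sigma hk) (right_neg := fun k hk => sigma_sigma hk)]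
  intro k hk
  rw [Finset.mem_range] at hk
  rw [TensorProduct.map_tmul]
  simp only [AlgHom.toLinearMap_apply]
  rw [antipode_eIdem hn q hq, xgen_pow_eq, antipode_X, ← sigma_cast hn0 hk, ← xgen_pow_eq,
    sigma_cast hn0 hk]
end
end

section
/- Let B be a bialgebra with a twist J such that (e₁² ⊗ e₂²)(J) is a twist for B ⊗ B. Then for any m ≥ 2 and any 1 ≤ i < j ≤ m, the element (eᵢᵐ ⊗ eⱼᵐ)(J) is a twist for B^{⊗m}, where eᵢᵐ : B → B^{⊗m} is the embedding into the i-th tensor factor. -/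
set_option synthInstance.maxHeartbeats 1000000

open scoped TensorProduct

noncomputable section

universe u

/-- `J ∈ R ⊗ R` is a twist for the bialgebra `R`: it is invertible, satisfies the twist
equation `(Δ ⊗ id)(J)(J ⊗ 1) = (id ⊗ Δ)(J)(1 ⊗ J)`, and `(ε ⊗ id)(J) = 1 = (id ⊗ ε)(J)`. -/
def IsTwist (K : Type u) [CommRing K] (R : Type u) [Ring R] [Bialgebra K R]
    (J : R ⊗[K] R) : Prop :=
  IsUnit J ∧
  (TensorProduct.assoc K R R R)
      ((LinearMap.rTensor R (Coalgebra.comul (R := K))) J * (J ⊗ₜ[K] (1 : R))) =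
    (LinearMap.lTensor R (Coalgebra.comul (R := K))) J * ((1 : R) ⊗ₜ[K] J) ∧
  (TensorProduct.lid K R) ((LinearMap.rTensor R (Coalgebra.counit (R := K))) J) = 1 ∧
  (TensorProduct.rid K R) ((LinearMap.lTensor R (Coalgebra.counit (R := K))) J) = 1

section Transport
variable (K : Type u) [CommRing K]

theorem IsTwist.map_of {R S : Type u} [Ring R] [Ring S] [Bialgebra K R] [Bialgebra K S]
    (f : R →ₐ[K] S)
    (hc : ∀ a : R, Coalgebra.comul (R := K) (f a)
        = TensorProduct.map f.toLinearMap f.toLinearMap (Coalgebra.comul a))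
    (he : ∀ a : R, Coalgebra.counit (R := K) (f a) = Coalgebra.counit (R := K) a)
    {J : R ⊗[K] R} (h : IsTwist K R J) :
    IsTwist K S (TensorProduct.map f.toLinearMap f.toLinearMap J) := by
  obtain ⟨h1, h2, h3, h4⟩ := h
  set fl := f.toLinearMap with hfl
  have hc' : ∀ a : R, Coalgebra.comul (R := K) (fl a)
      = TensorProduct.map fl fl (Coalgebra.comul a) := hc
  have he' : ∀ a : R, Coalgebra.counit (R := K) (fl a) = Coalgebra.counit (R := K) a := he
  have hf1 : fl 1 = 1 := f.map_one
  let f2 : R ⊗[K] R →ₐ[K] S ⊗[K] S := Algebra.TensorProduct.map f f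
  have hf2 : f2.toLinearMap = TensorProduct.map fl fl := by
    apply TensorProduct.ext'; intro a b; rfl
  have hf2' : ∀ z, f2 z = TensorProduct.map fl fl z := fun z => by
    rw [← hf2]; rfl
  let g3 : (R ⊗[K] R) ⊗[K] R →ₐ[K] (S ⊗[K] S) ⊗[K] S := Algebra.TensorProduct.map f2 f
  let g3' : R ⊗[K] (R ⊗[K] R) →ₐ[K] S ⊗[K] (S ⊗[K] S) := Algebra.TensorProduct.map f f2
  have hg3 : ∀ z, g3 z = TensorProduct.map (TensorProduct.map fl fl) fl z := fun z => by
    have : g3.toLinearMap = TensorProduct.map (TensorProduct.map fl fl) fl := by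
      apply TensorProduct.ext'; intro a b
      simp only [AlgHom.toLinearMap_apply, TensorProduct.map_tmul,
        Algebra.TensorProduct.map_tmul, g3]
      rw [hf2']; rfl
    rw [← this]; rfl
  have hg3' : ∀ z, g3' z = TensorProduct.map fl (TensorProduct.map fl fl) z := fun z => by
    have : g3'.toLinearMap = TensorProduct.map fl (TensorProduct.map fl fl) := by
      apply TensorProduct.ext'; intro a b
      simp only [AlgHom.toLinearMap_apply, TensorProduct.map_tmul,
        Algebra.TensorProduct.map_tmul, g3']
      rw [hf2']; rfl
    rw [← this]; rfl
  refine ⟨?_, ?_, ?_, ?_⟩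
  · rw [← hf2']; exact h1.map f2
  · -- twist equation
    have claimA : LinearMap.rTensor S (Coalgebra.comul (R := K)) ∘ₗ TensorProduct.map fl fl
        = TensorProduct.map (TensorProduct.map fl fl) fl
            ∘ₗ LinearMap.rTensor R (Coalgebra.comul (R := K)) := by
      apply TensorProduct.ext'; intro a b
      simp [hc' a]
    have claimB : LinearMap.lTensor S (Coalgebra.comul (R := K)) ∘ₗ TensorProduct.map fl fl
        = TensorProduct.map fl (TensorProduct.map fl fl)
            ∘ₗ LinearMap.lTensor R (Coalgebra.comul (R := K)) := by
      apply TensorProduct.ext'; intro a b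
      simp [hc' b]
    have claimAssoc : ∀ z : (R ⊗[K] R) ⊗[K] R,
        (TensorProduct.assoc K S S S) (TensorProduct.map (TensorProduct.map fl fl) fl z)
          = TensorProduct.map fl (TensorProduct.map fl fl)
              ((TensorProduct.assoc K R R R) z) := by
      intro z
      have : (TensorProduct.assoc K S S S).toLinearMap
            ∘ₗ TensorProduct.map (TensorProduct.map fl fl) fl
          = TensorProduct.map fl (TensorProduct.map fl fl)
            ∘ₗ (TensorProduct.assoc K R R R).toLinearMap := by
        apply TensorProduct.ext_threefold; intro a b c; simp
      exact LinearMap.congr_fun this z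
    have e1 : LinearMap.rTensor S (Coalgebra.comul (R := K)) (TensorProduct.map fl fl J)
        = g3 (LinearMap.rTensor R (Coalgebra.comul (R := K)) J) := by
      rw [hg3]; exact LinearMap.congr_fun claimA J
    have e2 : TensorProduct.map fl fl J ⊗ₜ[K] (1 : S)
        = g3 (J ⊗ₜ[K] (1 : R)) := by
      rw [hg3]; simp [TensorProduct.map_tmul, hf1]
    have eB : LinearMap.lTensor S (Coalgebra.comul (R := K)) (TensorProduct.map fl fl J)
        = TensorProduct.map fl (TensorProduct.map fl fl)
            (LinearMap.lTensor R (Coalgebra.comul (R := K)) J) :=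
      LinearMap.congr_fun claimB J
    rw [e1, e2, ← map_mul, hg3, claimAssoc, h2, ← hg3', map_mul, hg3', hg3', ← eB]
    congr 1
    simp [TensorProduct.map_tmul, hf1]
  · have claimC : ∀ z : R ⊗[K] R,
        (TensorProduct.lid K S) (LinearMap.rTensor S (Coalgebra.counit (R := K))
            (TensorProduct.map fl fl z))
          = f ((TensorProduct.lid K R) (LinearMap.rTensor R (Coalgebra.counit (R := K)) z)) := by
      intro z
      have : (TensorProduct.lid K S).toLinearMap
              ∘ₗ LinearMap.rTensor S (Coalgebra.counit (R := K))
              ∘ₗ TensorProduct.map fl fl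
          = fl ∘ₗ (TensorProduct.lid K R).toLinearMap
              ∘ₗ LinearMap.rTensor R (Coalgebra.counit (R := K)) := by
        apply TensorProduct.ext'; intro a b
        simp [he' a]
      exact LinearMap.congr_fun this z
    rw [claimC, h3, map_one]
  · have claimD : ∀ z : R ⊗[K] R,
        (TensorProduct.rid K S) (LinearMap.lTensor S (Coalgebra.counit (R := K))
            (TensorProduct.map fl fl z))
          = f ((TensorProduct.rid K R) (LinearMap.lTensor R (Coalgebra.counit (R := K)) z)) := by
      intro z
      have : (TensorProduct.rid K S).toLinearMap
              ∘ₗ LinearMap.lTensor S (Coalgebra.counit (R := K))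
              ∘ₗ TensorProduct.map fl fl
          = fl ∘ₗ (TensorProduct.rid K R).toLinearMap
              ∘ₗ LinearMap.lTensor R (Coalgebra.counit (R := K)) := by
        apply TensorProduct.ext'; intro a b
        simp [he' b]
      exact LinearMap.congr_fun this z
    rw [claimD, h4, map_one]

end Transport

section IncAux
variable (K : Type u) [CommRing K] (B T : Type u) [Ring B] [Ring T]
  [Bialgebra K B] [Bialgebra K T]

lemma ttt_tmul_one (x : B ⊗[K] B) :
    TensorProduct.tensorTensorTensorComm K B B T T (x ⊗ₜ[K] ((1 : T) ⊗ₜ[K] (1 : T)))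
      = TensorProduct.map
          (Algebra.TensorProduct.includeLeft : B →ₐ[K] B ⊗[K] T).toLinearMap
          (Algebra.TensorProduct.includeLeft : B →ₐ[K] B ⊗[K] T).toLinearMap x := by
  induction x with
  | zero => simp
  | tmul a b => simp
  | add x y hx hy => rw [TensorProduct.add_tmul]; simp_all

lemma ttt_one_tmul (y : T ⊗[K] T) :
    TensorProduct.tensorTensorTensorComm K B B T T (((1 : B) ⊗ₜ[K] (1 : B)) ⊗ₜ[K] y)
      = TensorProduct.map
          (Algebra.TensorProduct.includeRight : T →ₐ[K] B ⊗[K] T).toLinearMap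
          (Algebra.TensorProduct.includeRight : T →ₐ[K] B ⊗[K] T).toLinearMap y := by
  induction y with
  | zero => simp
  | tmul a b => simp
  | add x y hx hy => rw [TensorProduct.tmul_add]; simp_all

lemma comul_includeLeft (b : B) :
    Coalgebra.comul (R := K) ((Algebra.TensorProduct.includeLeft : B →ₐ[K] B ⊗[K] T) b)
      = TensorProduct.map
          (Algebra.TensorProduct.includeLeft : B →ₐ[K] B ⊗[K] T).toLinearMap
          (Algebra.TensorProduct.includeLeft : B →ₐ[K] B ⊗[K] T).toLinearMap
          (Coalgebra.comul b) := by
  show Coalgebra.comul (R := K) (b ⊗ₜ[K] (1 : T)) = _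
  rw [TensorProduct.comul_tmul]
  simp only [LinearMap.coe_comp, Function.comp_apply, TensorProduct.map_tmul,
    Bialgebra.comul_one]
  exact ttt_tmul_one K B T _

lemma comul_includeRight (t : T) :
    Coalgebra.comul (R := K) ((Algebra.TensorProduct.includeRight : T →ₐ[K] B ⊗[K] T) t)
      = TensorProduct.map
          (Algebra.TensorProduct.includeRight : T →ₐ[K] B ⊗[K] T).toLinearMap
          (Algebra.TensorProduct.includeRight : T →ₐ[K] B ⊗[K] T).toLinearMap
          (Coalgebra.comul t) := by
  show Coalgebra.comul (R := K) ((1 : B) ⊗ₜ[K] t) = _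
  rw [TensorProduct.comul_tmul]
  simp only [LinearMap.coe_comp, Function.comp_apply, TensorProduct.map_tmul,
    Bialgebra.comul_one]
  exact ttt_one_tmul K B T _

lemma counit_includeLeft (b : B) :
    Coalgebra.counit (R := K) ((Algebra.TensorProduct.includeLeft : B →ₐ[K] B ⊗[K] T) b)
      = Coalgebra.counit (R := K) b := by
  show Coalgebra.counit (R := K) (b ⊗ₜ[K] (1 : T)) = _
  rw [TensorProduct.counit_tmul]
  simp

lemma counit_includeRight (t : T) :
    Coalgebra.counit (R := K) ((Algebra.TensorProduct.includeRight : T →ₐ[K] B ⊗[K] T) t)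
      = Coalgebra.counit (R := K) t := by
  show Coalgebra.counit (R := K) ((1 : B) ⊗ₜ[K] t) = _
  rw [TensorProduct.counit_tmul]
  simp

end IncAux

variable (K B : Type u) [CommRing K] [Ring B] [Bialgebra K B]

/-- Iterated tensor powers of a bialgebra, bundled with their bialgebra structure:
`TPowAux K B m` carries the underlying type of `B^{⊗(m+1)}`. -/
def TPowAux : ℕ → Σ' (A : Type u) (_ : Ring A), Bialgebra K A
  | 0 => ⟨B, inferInstance, inferInstance⟩
  | (m + 1) =>
    let P := TPowAux m
    letI : Ring P.1 := P.2.1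
    letI : Bialgebra K P.1 := P.2.2
    ⟨B ⊗[K] P.1, inferInstance, inferInstance⟩

/-- The `(m+1)`-fold tensor power `B^{⊗(m+1)}`. -/
def TPow (m : ℕ) : Type u := (TPowAux K B m).1

instance (m : ℕ) : Ring (TPow K B m) := (TPowAux K B m).2.1

instance (m : ℕ) : Bialgebra K (TPow K B m) := (TPowAux K B m).2.2

/-- The embedding `e_i^{m+1} : B → B^{⊗(m+1)}` of `B` into the `i`-th tensor factor
(`0`-indexed). -/
def emb : (m : ℕ) → ℕ → (B →ₐ[K] TPow K B m)
  | 0, _ => AlgHom.id K B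
  | (m + 1), 0 =>
    (Algebra.TensorProduct.includeLeft : B →ₐ[K] B ⊗[K] TPow K B m)
  | (m + 1), (i + 1) =>
    ((Algebra.TensorProduct.includeRight : TPow K B m →ₐ[K] B ⊗[K] TPow K B m).comp
      (emb m i) : B →ₐ[K] B ⊗[K] TPow K B m)

set_option maxHeartbeats 2000000 in
lemma emb_comul : ∀ (m i : ℕ) (b : B),
    Coalgebra.comul (R := K) (emb K B m i b)
      = TensorProduct.map (emb K B m i).toLinearMap (emb K B m i).toLinearMap
          (Coalgebra.comul b)
  | 0, i, b => by
    show _ = TensorProduct.map LinearMap.id LinearMap.id _; rw [TensorProduct.map_id]; rfl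
  | (m + 1), 0, b => comul_includeLeft K B (TPow K B m) b
  | (m + 1), (i + 1), b => by
    show Coalgebra.comul (R := K)
        ((Algebra.TensorProduct.includeRight : TPow K B m →ₐ[K] B ⊗[K] TPow K B m)
          (emb K B m i b)) = _
    rw [comul_includeRight K B (TPow K B m), emb_comul m i b]
    rw [← LinearMap.comp_apply, ← TensorProduct.map_comp]
    rfl

set_option maxHeartbeats 2000000 in
lemma emb_counit : ∀ (m i : ℕ) (b : B),
    Coalgebra.counit (R := K) (emb K B m i b) = Coalgebra.counit (R := K) b
  | 0, i, b => rfl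
  | (m + 1), 0, b => counit_includeLeft K B (TPow K B m) b
  | (m + 1), (i + 1), b => by
    show Coalgebra.counit (R := K)
        ((Algebra.TensorProduct.includeRight : TPow K B m →ₐ[K] B ⊗[K] TPow K B m)
          (emb K B m i b)) = _
    rw [counit_includeRight K B (TPow K B m), emb_counit m i b]

set_option maxHeartbeats 2000000 in
lemma emb_commute : ∀ (m i j : ℕ), i < j → j ≤ m → ∀ (a b : B),
    Commute (emb K B m i a) (emb K B m j b)
  | 0, i, j, hij, hjm, a, b => absurd (lt_of_lt_of_le hij hjm) (Nat.not_lt_zero i)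
  | (m + 1), 0, (j + 1), hij, hjm, a, b => by
    show Commute ((Algebra.TensorProduct.includeLeft : B →ₐ[K] B ⊗[K] TPow K B m) a)
      ((Algebra.TensorProduct.includeRight : TPow K B m →ₐ[K] B ⊗[K] TPow K B m)
        (emb K B m j b))
    unfold Commute SemiconjBy
    simp [Algebra.TensorProduct.tmul_mul_tmul]
  | (m + 1), (i + 1), (j + 1), hij, hjm, a, b => by
    show Commute
      ((Algebra.TensorProduct.includeRight : TPow K B m →ₐ[K] B ⊗[K] TPow K B m)
        (emb K B m i a))
      ((Algebra.TensorProduct.includeRight : TPow K B m →ₐ[K] B ⊗[K] TPow K B m)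
        (emb K B m j b))
    exact (emb_commute m i j (Nat.lt_of_succ_lt_succ hij) (Nat.le_of_succ_le_succ hjm) a b).map _

set_option maxHeartbeats 2000000 in
def Femb (m i j : ℕ) (hij : i < j) (hjm : j ≤ m) : (B ⊗[K] B) →ₐ[K] TPow K B m :=
  Algebra.TensorProduct.lift (emb K B m i) (emb K B m j)
    (fun a b => emb_commute K B m i j hij hjm a b)

set_option maxHeartbeats 2000000 in
lemma Femb_key (m i j : ℕ) (hij : i < j) (hjm : j ≤ m) (x y : B ⊗[K] B) :
    TensorProduct.map (Femb K B m i j hij hjm).toLinearMap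
        (Femb K B m i j hij hjm).toLinearMap
        (TensorProduct.tensorTensorTensorComm K B B B B (x ⊗ₜ[K] y))
      = TensorProduct.map (emb K B m i).toLinearMap (emb K B m i).toLinearMap x
        * TensorProduct.map (emb K B m j).toLinearMap (emb K B m j).toLinearMap y := by
  induction x with
  | zero => simp
  | add x x' hx hx' => rw [TensorProduct.add_tmul]; simp only [map_add, hx, hx', add_mul]
  | tmul a a' =>
    induction y with
    | zero => simp
    | add y y' hy hy' => rw [TensorProduct.tmul_add]; simp only [map_add, hy, hy', mul_add]
    | tmul t t' =>
      simp only [TensorProduct.tensorTensorTensorComm_tmul, TensorProduct.map_tmul,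
        AlgHom.toLinearMap_apply, Femb, Algebra.TensorProduct.lift_tmul,
        Algebra.TensorProduct.tmul_mul_tmul]

set_option maxHeartbeats 2000000 in
lemma Femb_comul (m i j : ℕ) (hij : i < j) (hjm : j ≤ m) (z : B ⊗[K] B) :
    Coalgebra.comul (R := K) (Femb K B m i j hij hjm z)
      = TensorProduct.map (Femb K B m i j hij hjm).toLinearMap
          (Femb K B m i j hij hjm).toLinearMap (Coalgebra.comul z) := by
  induction z with
  | zero => simp
  | add z z' hz hz' => simp only [map_add, hz, hz']
  | tmul a t =>
    have h1 : Coalgebra.comul (R := K) (a ⊗ₜ[K] t)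
        = TensorProduct.tensorTensorTensorComm K B B B B
            (Coalgebra.comul (R := K) a ⊗ₜ[K] Coalgebra.comul (R := K) t) := by
      rw [TensorProduct.comul_tmul]; rfl
    rw [h1, Femb_key K B m i j hij hjm]
    have h2 : Femb K B m i j hij hjm (a ⊗ₜ[K] t) = emb K B m i a * emb K B m j t := by
      simp [Femb, Algebra.TensorProduct.lift_tmul]
    rw [h2, Bialgebra.comul_mul, emb_comul, emb_comul]

set_option maxHeartbeats 2000000 in
lemma Femb_counit (m i j : ℕ) (hij : i < j) (hjm : j ≤ m) (z : B ⊗[K] B) :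
    Coalgebra.counit (R := K) (Femb K B m i j hij hjm z)
      = Coalgebra.counit (R := K) z := by
  induction z with
  | zero => simp
  | add z z' hz hz' => simp only [map_add, hz, hz']
  | tmul a t =>
    have h2 : Femb K B m i j hij hjm (a ⊗ₜ[K] t) = emb K B m i a * emb K B m j t := by
      simp [Femb, Algebra.TensorProduct.lift_tmul]
    rw [h2, Bialgebra.counit_mul, emb_counit, emb_counit]
    rw [TensorProduct.counit_tmul]
    simp [mul_comm]

set_option maxHeartbeats 4000000 in
/-- if `J` is a twist for `B` such that `(e₁² ⊗ e₂²)(J)` is a twist for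
`B ⊗ B`, then `(eᵢᵐ ⊗ eⱼᵐ)(J)` is a twist for `B^{⊗m}` for all `m ≥ 2` and
`1 ≤ i < j ≤ m` (here `0`-indexed: `i < j < m`, and `B^{⊗m} = TPow K B (m-1)`). -/
theorem twist_tensor_power (J : B ⊗[K] B) (hJ : IsTwist K B J)
    (hJ2 : IsTwist K (TPow K B 1)
      (TensorProduct.map (emb K B 1 0).toLinearMap (emb K B 1 1).toLinearMap J)) :
    ∀ m : ℕ, 2 ≤ m → ∀ i j : ℕ, i < j → j < m →
      IsTwist K (TPow K B (m - 1))
        (TensorProduct.map (emb K B (m - 1) i).toLinearMap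
          (emb K B (m - 1) j).toLinearMap J) := by
  intro m hm i j hij hjm
  have hj : j ≤ m - 1 := Nat.le_sub_one_of_lt hjm
  set n := m - 1 with hn
  set f : (B ⊗[K] B) →ₐ[K] TPow K B n := Femb K B n i j hij hj with hf
  have hJ2' : IsTwist K (B ⊗[K] B)
      (TensorProduct.map (Algebra.TensorProduct.includeLeft : B →ₐ[K] B ⊗[K] B).toLinearMap
        (Algebra.TensorProduct.includeRight : B →ₐ[K] B ⊗[K] B).toLinearMap J) := hJ2
  have key := IsTwist.map_of K f (Femb_comul K B n i j hij hj)
    (Femb_counit K B n i j hij hj) hJ2'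
  have heq : TensorProduct.map f.toLinearMap f.toLinearMap
      (TensorProduct.map
        (Algebra.TensorProduct.includeLeft : B →ₐ[K] B ⊗[K] B).toLinearMap
        (Algebra.TensorProduct.includeRight : B →ₐ[K] B ⊗[K] B).toLinearMap J)
      = TensorProduct.map (emb K B n i).toLinearMap (emb K B n j).toLinearMap J := by
    have c1 : f.toLinearMap ∘ₗ
        (Algebra.TensorProduct.includeLeft : B →ₐ[K] B ⊗[K] B).toLinearMap
        = (emb K B n i).toLinearMap := by
      apply LinearMap.ext; intro b
      show f (b ⊗ₜ[K] (1 : B)) = emb K B n i b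
      simp [hf, Femb, Algebra.TensorProduct.lift_tmul]
    have c2 : f.toLinearMap ∘ₗ
        (Algebra.TensorProduct.includeRight : B →ₐ[K] B ⊗[K] B).toLinearMap
        = (emb K B n j).toLinearMap := by
      apply LinearMap.ext; intro b
      show f ((1 : B) ⊗ₜ[K] b) = emb K B n j b
      simp [hf, Femb, Algebra.TensorProduct.lift_tmul]
    rw [← LinearMap.comp_apply, ← TensorProduct.map_comp, c1, c2]
  rw [← heq]
  exact key
end
end
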